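/- There exists no degree 5 monic hyperbolic polynomial x^5 + a_4 x^4 + a_3 x^3 + a_2 x^2 + a_1 x + a_0 with two positive roots β < α and three negative roots of moduli γ_1 < γ_2 < γ_3 satisfying 0 < β < γ_1 < γ_2 < γ_3 < α, and with a_4 > 0, a_3 = 0, a_2 < 0, a_1 < 0, a_0 > 0. -/
import Mathlib


open Polynomial

lemma expand5 (α β γ₁ γ₂ γ₃ : ℝ) :
    ((X - C α) * (X - C β) * (X + C γ₁) * (X + C γ₂) * (X + C γ₃) :
        Polynomial ℝ) =
      C (α*β*γ₁*γ₂*γ₃) + C (α*β*(γ₁*γ₂+γ₁*γ₃+γ₂*γ₃) - (α+β)*(γ₁*γ₂*γ₃)) * X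
      + C (γ₁*γ₂*γ₃ - (α+β)*(γ₁*γ₂+γ₁*γ₃+γ₂*γ₃) + α*β*(γ₁+γ₂+γ₃)) * X^2
      + C ((γ₁*γ₂+γ₁*γ₃+γ₂*γ₃) - (α+β)*(γ₁+γ₂+γ₃) + α*β) * X^3
      + C ((γ₁+γ₂+γ₃) - α - β) * X^4 + X^5 := by
  push_cast [C_mul, C_add, C_sub, C_neg]
  ring

lemma coeffs (α β γ₁ γ₂ γ₃ : ℝ) :
    ((X - C α) * (X - C β) * (X + C γ₁) * (X + C γ₂) * (X + C γ₃) :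
        Polynomial ℝ).coeff 4 = (γ₁+γ₂+γ₃) - α - β ∧
    ((X - C α) * (X - C β) * (X + C γ₁) * (X + C γ₂) * (X + C γ₃) :
        Polynomial ℝ).coeff 3 =
      (γ₁*γ₂+γ₁*γ₃+γ₂*γ₃) - (α+β)*(γ₁+γ₂+γ₃) + α*β := by
  rw [expand5]
  constructor <;>
    simp only [coeff_add, coeff_C_mul, coeff_X_pow, coeff_C, coeff_X, coeff_mul_X] <;> norm_num

/-- There is no degree-5 monic hyperbolic polynomial
`x^5 + a₄x⁴ + a₃x³ + a₂x² + a₁x + a₀` with positive roots `β < α` and negative roots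
of moduli `γ₁ < γ₂ < γ₃` satisfying `0 < β < γ₁ < γ₂ < γ₃ < α` and with `a₄ > 0`,
`a₃ = 0`, `a₂ < 0`, `a₁ < 0`, `a₀ > 0`. -/
theorem stmt15 :
    ¬ ∃ α β γ₁ γ₂ γ₃ : ℝ,
      0 < β ∧ β < γ₁ ∧ γ₁ < γ₂ ∧ γ₂ < γ₃ ∧ γ₃ < α ∧
      (0 < ((X - C α) * (X - C β) * (X + C γ₁) * (X + C γ₂) * (X + C γ₃) :
        Polynomial ℝ).coeff 4) ∧
      (((X - C α) * (X - C β) * (X + C γ₁) * (X + C γ₂) * (X + C γ₃) :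
        Polynomial ℝ).coeff 3 = 0) ∧
      (((X - C α) * (X - C β) * (X + C γ₁) * (X + C γ₂) * (X + C γ₃) :
        Polynomial ℝ).coeff 2 < 0) ∧
      (((X - C α) * (X - C β) * (X + C γ₁) * (X + C γ₂) * (X + C γ₃) :
        Polynomial ℝ).coeff 1 < 0) ∧
      (0 < ((X - C α) * (X - C β) * (X + C γ₁) * (X + C γ₂) * (X + C γ₃) :
        Polynomial ℝ).coeff 0) := by
  rintro ⟨α, β, γ₁, γ₂, γ₃, hβ, h1, h2, h3, h4, h5, h6, -, -, -⟩
  obtain ⟨c4, c3⟩ := coeffs α β γ₁ γ₂ γ₃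
  rw [c4] at h5
  rw [c3] at h6
  -- a₃ = 0 gives β(α - e₁) = αe₁ - e₂ > 0 while α - e₁ < -β < 0.
  nlinarith [mul_pos (sub_pos.2 h4) (hβ.trans h1), mul_pos (sub_pos.2 h4) ((hβ.trans h1).trans h2),
    mul_pos (sub_pos.2 (h3.trans h4)) (hβ.trans h1), mul_pos hβ h5]
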